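/- arXiv:2104.07057 — 5 statements merged into one kernel-verified Lean document; each statement's English description precedes it below -/
import Mathlib

section
/- Let $\Gamma$ be a simple oriented acyclic graph with vertex set $\{1,\ldots,n\}$ such that $i \to j$ in $\Gamma$ implies $i < j$. In the Hecke–Kiselman monoid $\HK_\Gamma$ (generated by idempotents $x_1,\ldots,x_n$ with $x_i x_j = x_j x_i$ when $i,j$ are not connected, and $x_i x_j x_i = x_j x_i x_j = x_i x_j$ when $i \to j$), for every subset $X = \{i_1 < i_2 < \cdots < i_j\} \subseteq \{1,\ldots,n\}$ the element $e_X = x_{i_1} x_{i_2} \cdots x_{i_j}$ is an idempotent. -/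
/-- The defining relations of the Hecke–Kiselman monoid of an oriented graph with
arrow relation `E` on `Fin n`: each generator is idempotent, non-connected generators
commute, and `x_i x_j x_i = x_j x_i x_j = x_i x_j` whenever `i → j`. -/
def hkRel {n : ℕ} (E : Fin n → Fin n → Prop) :
    FreeMonoid (Fin n) → FreeMonoid (Fin n) → Prop := fun w₁ w₂ =>
  (∃ i, w₁ = FreeMonoid.of i * FreeMonoid.of i ∧ w₂ = FreeMonoid.of i) ∨
  (∃ i j, i ≠ j ∧ ¬ E i j ∧ ¬ E j i ∧
    w₁ = FreeMonoid.of i * FreeMonoid.of j ∧ w₂ = FreeMonoid.of j * FreeMonoid.of i) ∨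
  (∃ i j, E i j ∧
    ((w₁ = FreeMonoid.of i * FreeMonoid.of j * FreeMonoid.of i ∧
      w₂ = FreeMonoid.of i * FreeMonoid.of j) ∨
     (w₁ = FreeMonoid.of j * FreeMonoid.of i * FreeMonoid.of j ∧
      w₂ = FreeMonoid.of i * FreeMonoid.of j)))

/-- The Hecke–Kiselman monoid of the oriented graph `E`. -/
def HKmonoid {n : ℕ} (E : Fin n → Fin n → Prop) : Type := (conGen (hkRel E)).Quotient

instance {n : ℕ} (E : Fin n → Fin n → Prop) : Monoid (HKmonoid E) :=
  Con.monoid _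

/-- The generator `x i` of the Hecke–Kiselman monoid. -/
def hkGen {n : ℕ} (E : Fin n → Fin n → Prop) (i : Fin n) : HKmonoid E :=
  (conGen (hkRel E)).mk' (FreeMonoid.of i)

/-- For `X ⊆ {1,…,n}`, the element `e_X = x_{i_1} ⋯ x_{i_j}` where
`X = {i_1 < ⋯ < i_j}`; `e_∅ = 1`. -/
def hkIdemElt {n : ℕ} (E : Fin n → Fin n → Prop) (X : Finset (Fin n)) : HKmonoid E :=
  ((X.sort (· ≤ ·)).map (hkGen E)).prod

namespace HKaux

variable {n : ℕ} (E : Fin n → Fin n → Prop)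

/-- Product of generators along a list of vertices. -/
def f (l : List (Fin n)) : HKmonoid E := (l.map (hkGen E)).prod

lemma f_nil : f E ([] : List (Fin n)) = 1 := rfl

lemma f_append (u v : List (Fin n)) : f E (u ++ v) = f E u * f E v := by
  simp [f]

lemma f_singleton (k : Fin n) : f E [k] = hkGen E k := by
  simp [f]

lemma rel_mk {a b : FreeMonoid (Fin n)} (h : hkRel E a b) :
    (conGen (hkRel E)).mk' a = (conGen (hkRel E)).mk' b :=
  (Con.eq _).2 (ConGen.Rel.of a b h)

lemma gen_mul (i j : Fin n) :
    hkGen E i * hkGen E j = (conGen (hkRel E)).mk' (FreeMonoid.of i * FreeMonoid.of j) := by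
  simp [hkGen]
  rfl

lemma gen_idem (i : Fin n) : hkGen E i * hkGen E i = hkGen E i := by
  rw [gen_mul]
  exact rel_mk E (Or.inl ⟨i, rfl, rfl⟩)

lemma gen_comm {i j : Fin n} (hne : i ≠ j) (h₁ : ¬ E i j) (h₂ : ¬ E j i) :
    hkGen E i * hkGen E j = hkGen E j * hkGen E i := by
  rw [gen_mul, gen_mul]
  exact rel_mk E (Or.inr (Or.inl ⟨i, j, hne, h₁, h₂, rfl, rfl⟩))

lemma gen_braid₁ {i j : Fin n} (h : E i j) :
    hkGen E i * hkGen E j * hkGen E i = hkGen E i * hkGen E j := by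
  simp only [hkGen, ← map_mul]
  exact rel_mk E (Or.inr (Or.inr ⟨i, j, h, Or.inl ⟨rfl, rfl⟩⟩))

lemma gen_braid₂ {i j : Fin n} (h : E i j) :
    hkGen E j * hkGen E i * hkGen E j = hkGen E i * hkGen E j := by
  simp only [hkGen, ← map_mul]
  exact rel_mk E (Or.inr (Or.inr ⟨i, j, h, Or.inr ⟨rfl, rfl⟩⟩))

lemma key (hacyc : ∀ i j : Fin n, E i j → i < j) (m : Fin n) :
    ∀ l : List (Fin n), (∀ k ∈ l, k < m) →
      hkGen E m * f E l * hkGen E m = f E l * hkGen E m := by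
  intro l
  induction l using List.reverseRecOn with
  | nil =>
      intro _
      simp [f_nil, gen_idem]
  | append_singleton u k ih =>
      intro hl
      have hk : k < m := hl k (by simp)
      have hu : ∀ a ∈ u, a < m := fun a ha => hl a (by simp [ha])
      have hmk : ¬ E m k := fun h => absurd (hacyc m k h) (not_lt_of_gt hk)
      rw [f_append, f_singleton]
      by_cases hkm : E k m
      · have b2 := gen_braid₂ E hkm
        calc hkGen E m * (f E u * hkGen E k) * hkGen E m
            = hkGen E m * f E u * (hkGen E m * hkGen E k * hkGen E m) := by
              rw [b2]; simp only [mul_assoc]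
          _ = (hkGen E m * f E u * hkGen E m) * (hkGen E k * hkGen E m) := by
              simp only [mul_assoc]
          _ = (f E u * hkGen E m) * (hkGen E k * hkGen E m) := by rw [ih hu]
          _ = f E u * (hkGen E m * hkGen E k * hkGen E m) := by
              simp only [mul_assoc]
          _ = f E u * (hkGen E k * hkGen E m) := by rw [b2]
          _ = f E u * hkGen E k * hkGen E m := by rw [mul_assoc]
      · have hne : k ≠ m := ne_of_lt hk
        have hc : hkGen E k * hkGen E m = hkGen E m * hkGen E k :=
          gen_comm E hne hkm hmk
        calc hkGen E m * (f E u * hkGen E k) * hkGen E m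
            = hkGen E m * f E u * (hkGen E k * hkGen E m) := by
              simp only [mul_assoc]
          _ = hkGen E m * f E u * (hkGen E m * hkGen E k) := by rw [hc]
          _ = (hkGen E m * f E u * hkGen E m) * hkGen E k := by
              simp only [mul_assoc]
          _ = (f E u * hkGen E m) * hkGen E k := by rw [ih hu]
          _ = f E u * (hkGen E m * hkGen E k) := by simp only [mul_assoc]
          _ = f E u * (hkGen E k * hkGen E m) := by rw [hc]
          _ = f E u * hkGen E k * hkGen E m := by rw [mul_assoc]

lemma main (hacyc : ∀ i j : Fin n, E i j → i < j) :
    ∀ l : List (Fin n), l.Pairwise (· < ·) → f E l * f E l = f E l := by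
  intro l
  induction l using List.reverseRecOn with
  | nil => intro _; simp [f_nil]
  | append_singleton u m ih =>
      intro hl
      rw [List.pairwise_append] at hl
      obtain ⟨hu, -, hum⟩ := hl
      have hum' : ∀ a ∈ u, a < m := fun a ha => hum a ha m (by simp)
      rw [f_append, f_singleton]
      calc f E u * hkGen E m * (f E u * hkGen E m)
          = f E u * (hkGen E m * f E u * hkGen E m) := by simp only [mul_assoc]
        _ = f E u * (f E u * hkGen E m) := by rw [key E hacyc m u hum']
        _ = (f E u * f E u) * hkGen E m := by simp only [mul_assoc]
        _ = f E u * hkGen E m := by rw [ih hu]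

end HKaux

/-- if `Γ` is acyclic with `i → j` implying `i < j`, then every `e_X`
is an idempotent of `HK_Γ`. -/
theorem eX_isIdempotent {n : ℕ} (E : Fin n → Fin n → Prop)
    (hacyc : ∀ i j : Fin n, E i j → i < j) (X : Finset (Fin n)) :
    IsIdempotentElem (hkIdemElt E X) := by
  have h : hkIdemElt E X = HKaux.f E (X.sort (· ≤ ·)) := rfl
  unfold IsIdempotentElem
  rw [h]
  exact HKaux.main E hacyc _ (X.sortedLT_sort.pairwise)
end

section
/- For any finite oriented graph $\Gamma$, there is a bijection between the set of idempotents of the Hecke–Kiselman monoid $\HK_\Gamma$ and the set of full (induced) subgraphs of $\Gamma$ that contain no oriented cycle. -/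
open FreeMonoid

namespace HKProof

variable {n : ℕ}

noncomputable def predSup (E : Fin n → Fin n → Prop) (i : Fin n) (a : Fin n → ℕ) : ℕ :=
  letI := Classical.dec
  (Finset.univ.filter (fun p => E p i)).sup fun p => a p + 1

noncomputable def Tact (E : Fin n → Fin n → Prop) (i : Fin n) (a : Fin n → ℕ) : Fin n → ℕ :=
  Function.update a i (max (max (a i) 1) (predSup E i a))

variable {E : Fin n → Fin n → Prop}

lemma Tact_apply_ne {i k : Fin n} (h : k ≠ i) (a : Fin n → ℕ) : Tact E i a k = a k :=
  Function.update_of_ne h _ _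

lemma Tact_apply_self (i : Fin n) (a : Fin n → ℕ) :
    Tact E i a i = max (max (a i) 1) (predSup E i a) :=
  Function.update_self _ _ _

lemma predSup_congr {i : Fin n} {a b : Fin n → ℕ} (h : ∀ p, E p i → a p = b p) :
    predSup E i a = predSup E i b := by
  classical
  unfold predSup
  apply Finset.sup_congr rfl
  intro p hp
  rw [Finset.mem_filter] at hp
  rw [h p hp.2]

lemma predSup_mono {i : Fin n} {a b : Fin n → ℕ} (h : ∀ p, a p ≤ b p) :
    predSup E i a ≤ predSup E i b := by
  classical
  exact Finset.sup_mono_fun fun p _ => by have := h p; omega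

lemma le_predSup {i p : Fin n} (hp : E p i) (a : Fin n → ℕ) : a p + 1 ≤ predSup E i a := by
  classical
  unfold predSup
  exact Finset.le_sup (f := fun q => a q + 1)
    (by simp only [Finset.mem_filter, Finset.mem_univ, true_and]; exact hp)

lemma le_Tact (i : Fin n) (a : Fin n → ℕ) : ∀ k, a k ≤ Tact E i a k := by
  intro k
  by_cases h : k = i
  · subst h; rw [Tact_apply_self]; omega
  · rw [Tact_apply_ne h]

lemma Tact_Tact {i : Fin n} (hii : ¬ E i i) (a : Fin n → ℕ) :
    Tact E i (Tact E i a) = Tact E i a := by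
  funext k
  by_cases hk : k = i
  · subst hk
    rw [Tact_apply_self,
      show predSup E k (Tact E k a) = predSup E k a from
        predSup_congr fun p hp => Tact_apply_ne (by rintro rfl; exact hii hp) a,
      Tact_apply_self]
    omega
  · rw [Tact_apply_ne hk, Tact_apply_ne hk]

lemma Tact_comm {i j : Fin n} (hij : i ≠ j) (h1 : ¬ E i j) (h2 : ¬ E j i) (a : Fin n → ℕ) :
    Tact E j (Tact E i a) = Tact E i (Tact E j a) := by
  funext k
  by_cases hki : k = i
  · subst hki
    rw [show Tact E j (Tact E k a) k = Tact E k a k from Tact_apply_ne hij _,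
      Tact_apply_self, Tact_apply_self,
      show Tact E j a k = a k from Tact_apply_ne hij _,
      show predSup E k (Tact E j a) = predSup E k a from
        predSup_congr fun p hp => Tact_apply_ne (by rintro rfl; exact h2 hp) a]
  · by_cases hkj : k = j
    · subst hkj
      rw [show Tact E i (Tact E k a) k = Tact E k a k from Tact_apply_ne (Ne.symm hij) _,
        Tact_apply_self, Tact_apply_self,
        show Tact E i a k = a k from Tact_apply_ne (Ne.symm hij) _,
        show predSup E k (Tact E i a) = predSup E k a from
          predSup_congr fun p hp => Tact_apply_ne (by rintro rfl; exact h1 hp) a]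
    · rw [Tact_apply_ne hkj, Tact_apply_ne hki, Tact_apply_ne hki, Tact_apply_ne hkj]

lemma Tact_edge_A {i j : Fin n} (hE : E i j) (hsimple : ∀ i j : Fin n, E i j → i ≠ j ∧ ¬ E j i)
    (a : Fin n → ℕ) : Tact E i (Tact E j (Tact E i a)) = Tact E j (Tact E i a) := by
  obtain ⟨hij, hji⟩ := hsimple i j hE
  have hii : ¬ E i i := fun h => (hsimple i i h).1 rfl
  funext k
  by_cases hk : k = i
  · subst hk
    rw [Tact_apply_self,
      show predSup E k (Tact E j (Tact E k a)) = predSup E k a from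
        predSup_congr fun p hp => by
          rw [Tact_apply_ne (by rintro rfl; exact hji hp),
            Tact_apply_ne (by rintro rfl; exact hii hp)],
      show Tact E j (Tact E k a) k = Tact E k a k from Tact_apply_ne hij _,
      Tact_apply_self]
    omega
  · rw [Tact_apply_ne hk]

lemma Tact_edge_B {i j : Fin n} (hE : E i j) (hsimple : ∀ i j : Fin n, E i j → i ≠ j ∧ ¬ E j i)
    (a : Fin n → ℕ) : Tact E j (Tact E i (Tact E j a)) = Tact E j (Tact E i a) := by
  obtain ⟨hij, hji⟩ := hsimple i j hE
  have hjj : ¬ E j j := fun h => (hsimple j j h).1 rfl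
  have hMi : Tact E i (Tact E j a) i = Tact E i a i := by
    rw [Tact_apply_self, Tact_apply_self,
      show Tact E j a i = a i from Tact_apply_ne hij _,
      show predSup E i (Tact E j a) = predSup E i a from
        predSup_congr fun p hp => Tact_apply_ne (by rintro rfl; exact hji hp) a]
  funext k
  by_cases hkj : k = j
  · subst hkj
    rw [Tact_apply_self, Tact_apply_self,
      show predSup E k (Tact E i (Tact E k a)) = predSup E k (Tact E i a) from
        predSup_congr fun p hp => by
          by_cases hpi : p = i
          · subst hpi; exact hMi
          · rw [Tact_apply_ne hpi, Tact_apply_ne hpi,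
              Tact_apply_ne (show p ≠ k by rintro rfl; exact hjj hp)],
      show Tact E i (Tact E k a) k = Tact E k a k from Tact_apply_ne (Ne.symm hij) _,
      Tact_apply_self,
      show Tact E i a k = a k from Tact_apply_ne (Ne.symm hij) _]
    have h4 : predSup E k a ≤ predSup E k (Tact E i a) := predSup_mono (le_Tact i a)
    omega
  · by_cases hki : k = i
    · subst hki
      rw [show Tact E j (Tact E k (Tact E j a)) k = Tact E k (Tact E j a) k from
          Tact_apply_ne hij _,
        show Tact E j (Tact E k a) k = Tact E k a k from Tact_apply_ne hij _]
      exact hMi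
    · rw [Tact_apply_ne hkj, Tact_apply_ne hki, Tact_apply_ne hkj,
        Tact_apply_ne hkj, Tact_apply_ne hki]


/-! ### The action of words, and congruence invariance -/

noncomputable def actL (E : Fin n → Fin n → Prop) (l : List (Fin n)) (a : Fin n → ℕ) :
    Fin n → ℕ :=
  l.foldl (fun a i => Tact E i a) a

lemma actL_append (l₁ l₂ : List (Fin n)) (a : Fin n → ℕ) :
    actL E (l₁ ++ l₂) a = actL E l₂ (actL E l₁ a) :=
  List.foldl_append ..

lemma le_actL (l : List (Fin n)) (a : Fin n → ℕ) : ∀ k, a k ≤ actL E l a k := by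
  induction l generalizing a with
  | nil => exact fun k => le_rfl
  | cons i l ih =>
    intro k
    exact le_trans (le_Tact i a k) (ih (Tact E i a) k)

lemma fix_of_actL_fix (l : List (Fin n)) (a : Fin n → ℕ) (h : actL E l a = a) :
    ∀ i ∈ l, Tact E i a = a := by
  induction l generalizing a with
  | nil => intro i hi; cases hi
  | cons j l ih =>
    have hTa : Tact E j a = a := by
      apply funext
      intro k
      have h1 : a k ≤ Tact E j a k := le_Tact j a k
      have h2 : Tact E j a k ≤ actL E l (Tact E j a) k := le_actL l _ k
      have h3 : actL E l (Tact E j a) k = a k := congrFun h k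
      omega
    have h' : actL E l a = a := by
      calc actL E l a = actL E l (Tact E j a) := by rw [hTa]
        _ = a := h
    intro i hi
    rcases List.mem_cons.mp hi with rfl | hi
    · exact hTa
    · exact ih a h' i hi

/-- The congruence "having the same action". -/
noncomputable def actCon (E : Fin n → Fin n → Prop) : Con (FreeMonoid (Fin n)) where
  r := fun w₁ w₂ => actL E w₁.toList = actL E w₂.toList
  iseqv := ⟨fun _ => rfl, Eq.symm, Eq.trans⟩
  mul' := fun {w x y z} h1 h2 => by
    funext a
    show actL E (toList (w * y)) a = actL E (toList (x * z)) a
    rw [toList_mul, toList_mul, actL_append, actL_append, h1, h2]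

lemma conGen_le_actCon (hsimple : ∀ i j : Fin n, E i j → i ≠ j ∧ ¬ E j i) :
    conGen (hkRel E) ≤ actCon E := by
  apply Con.conGen_le.mpr
  rintro x y (⟨i, rfl, rfl⟩ | ⟨i, j, hij, h1, h2, rfl, rfl⟩ |
    ⟨i, j, hE, (⟨rfl, rfl⟩ | ⟨rfl, rfl⟩)⟩) <;> funext a
  · show Tact E i (Tact E i a) = Tact E i a
    exact Tact_Tact (fun h => (hsimple i i h).1 rfl) a
  · show Tact E j (Tact E i a) = Tact E i (Tact E j a)
    exact Tact_comm hij h1 h2 a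
  · show Tact E i (Tact E j (Tact E i a)) = Tact E j (Tact E i a)
    exact Tact_edge_A hE hsimple a
  · show Tact E j (Tact E i (Tact E j a)) = Tact E j (Tact E i a)
    exact Tact_edge_B hE hsimple a

/-! ### Quotient-level infrastructure -/

variable (E) in
/-- The canonical projection to the Hecke–Kiselman monoid. -/
def toHK : FreeMonoid (Fin n) → HKmonoid E := (conGen (hkRel E)).mk'

lemma toHK_mul (x y : FreeMonoid (Fin n)) : toHK E (x * y) = toHK E x * toHK E y :=
  map_mul _ _ _

lemma toHK_one : toHK E 1 = 1 := map_one _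

lemma toHK_eq {x y : FreeMonoid (Fin n)} : toHK E x = toHK E y ↔ conGen (hkRel E) x y :=
  Con.eq _

variable (E) in
/-- Generator. -/
def X (i : Fin n) : HKmonoid E := toHK E (of i)

variable (E) in
/-- Product of a list of generators. -/
def Pl (l : List (Fin n)) : HKmonoid E := toHK E (ofList l)

lemma Pl_nil : Pl E ([] : List (Fin n)) = 1 := toHK_one

lemma Pl_cons (i : Fin n) (l : List (Fin n)) : Pl E (i :: l) = X E i * Pl E l := by
  rw [Pl, ofList_cons, toHK_mul]; rfl

lemma Pl_append (l₁ l₂ : List (Fin n)) : Pl E (l₁ ++ l₂) = Pl E l₁ * Pl E l₂ := by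
  rw [Pl, ofList_append, toHK_mul]; rfl

lemma Pl_singleton (i : Fin n) : Pl E [i] = X E i := by
  rw [Pl_cons, Pl_nil, mul_one]

lemma rel_eq {w₁ w₂ : FreeMonoid (Fin n)} (h : hkRel E w₁ w₂) : toHK E w₁ = toHK E w₂ :=
  toHK_eq.mpr (ConGen.Rel.of _ _ h)

lemma xx (i : Fin n) : X E i * X E i = X E i := by
  rw [X, ← toHK_mul]
  exact rel_eq (Or.inl ⟨i, rfl, rfl⟩)

lemma xcomm {i j : Fin n} (hij : i ≠ j) (h1 : ¬ E i j) (h2 : ¬ E j i) :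
    X E i * X E j = X E j * X E i := by
  rw [X, X, ← toHK_mul, ← toHK_mul]
  exact rel_eq (Or.inr (Or.inl ⟨i, j, hij, h1, h2, rfl, rfl⟩))

lemma xiji {i j : Fin n} (hE : E i j) : X E i * X E j * X E i = X E i * X E j := by
  rw [X, X, ← toHK_mul, ← toHK_mul]
  exact rel_eq (Or.inr (Or.inr ⟨i, j, hE, Or.inl ⟨rfl, rfl⟩⟩))

lemma xjij {i j : Fin n} (hE : E i j) : X E j * X E i * X E j = X E i * X E j := by
  rw [X, X, ← toHK_mul, ← toHK_mul]
  exact rel_eq (Or.inr (Or.inr ⟨i, j, hE, Or.inr ⟨rfl, rfl⟩⟩))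

lemma xx' (i : Fin n) (m : HKmonoid E) : X E i * (X E i * m) = X E i * m := by
  rw [← mul_assoc, xx]

lemma xcomm' {i j : Fin n} (hij : i ≠ j) (h1 : ¬ E i j) (h2 : ¬ E j i) (m : HKmonoid E) :
    X E i * (X E j * m) = X E j * (X E i * m) := by
  rw [← mul_assoc, ← mul_assoc, xcomm hij h1 h2]

lemma xjij' {i j : Fin n} (hE : E i j) (m : HKmonoid E) :
    X E j * (X E i * (X E j * m)) = X E i * (X E j * m) := by
  rw [← mul_assoc, ← mul_assoc, ← mul_assoc, xjij hE]

/-- Key absorption lemma: `x_b u x_b = u x_b` when `b` has no edges to letters of `u`. -/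
lemma absorb (b : Fin n) :
    ∀ u : List (Fin n), (∀ i ∈ u, i ≠ b ∧ ¬ E b i) → ∀ m : HKmonoid E,
      X E b * (Pl E u * (X E b * m)) = Pl E u * (X E b * m) := by
  intro u
  induction u using List.reverseRecOn with
  | nil =>
    intro _ m
    simp only [Pl_nil, one_mul]
    exact xx' b m
  | append_singleton l i ih =>
    intro hcond m
    obtain ⟨hib, hbi⟩ := hcond i (by simp)
    have hl : ∀ j ∈ l, j ≠ b ∧ ¬ E b j := fun j hj => hcond j (by simp [hj])
    rw [Pl_append, Pl_singleton, mul_assoc (Pl E l) (X E i)]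
    by_cases hEib : E i b
    · rw [show X E i * (X E b * m) = X E b * (X E i * (X E b * m)) from (xjij' hEib m).symm]
      exact ih hl _
    · rw [xcomm' hib hEib hbi m]
      exact ih hl _

/-! ### Acyclicity, sinks and the canonical idempotent word -/

variable (E) in
/-- The induced subgraph on `V` has no oriented cycle. -/
def Acyc (V : Finset (Fin n)) : Prop :=
  ∀ v : Fin n, ¬ Relation.TransGen (fun a b => a ∈ V ∧ b ∈ V ∧ E a b) v v

lemma acyc_mono {V W : Finset (Fin n)} (hWV : W ⊆ V) (h : Acyc E V) : Acyc E W :=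
  fun v hv => h v (Relation.TransGen.mono (fun _ _ hab => ⟨hWV hab.1, hWV hab.2.1, hab.2.2⟩) v v hv)

lemma sink_exists {V : Finset (Fin n)} (hne : V.Nonempty) (hacyc : Acyc E V) :
    ∃ b ∈ V, ∀ i ∈ V, ¬ E b i := by
  classical
  set r := Relation.TransGen (fun a b : Fin n => a ∈ V ∧ b ∈ V ∧ E a b) with hr
  haveI : IsTrans (Fin n) (flip r) := ⟨fun a b c h1 h2 => Relation.TransGen.trans h2 h1⟩
  haveI : IsIrrefl (Fin n) (flip r) := ⟨fun a h => hacyc a h⟩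
  obtain ⟨b, hb, hmin⟩ :=
    (Finite.wellFounded_of_trans_of_irrefl (flip r)).has_min (↑V : Set (Fin n))
      (by exact_mod_cast hne)
  refine ⟨b, by exact_mod_cast hb, fun i hi hE => ?_⟩
  exact hmin i (by exact_mod_cast hi)
    (Relation.TransGen.single ⟨by exact_mod_cast hb, hi, hE⟩)

open Classical in
/-- A topological sort of `V` (sinks last), defined for acyclic `V`. -/
noncomputable def eList (E : Fin n → Fin n → Prop) (V : Finset (Fin n)) : List (Fin n) :=
  if h : ∃ b ∈ V, ∀ i ∈ V, ¬ E b i then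
    eList E (V.erase h.choose) ++ [h.choose]
  else []
termination_by V.card
decreasing_by
  exact Finset.card_erase_lt_of_mem h.choose_spec.1

lemma eList_empty : eList E (∅ : Finset (Fin n)) = [] := by
  rw [eList, dif_neg]
  rintro ⟨b, hb, -⟩
  exact absurd hb (Finset.notMem_empty b)

/-- Main properties of `eList` on acyclic sets: its letters are exactly `V`, and the
corresponding product absorbs every generator from `V` on the right. -/
lemma eList_main :
    ∀ (N : ℕ) (V : Finset (Fin n)), V.card ≤ N → Acyc E V →
      (eList E V).toFinset = V ∧
        ∀ j ∈ V, Pl E (eList E V) * X E j = Pl E (eList E V) := by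
  intro N
  induction N with
  | zero =>
    intro V hcard _
    have : V = ∅ := Finset.card_eq_zero.mp (Nat.le_zero.mp hcard)
    subst this
    refine ⟨by simp [eList_empty], fun j hj => absurd hj (Finset.notMem_empty j)⟩
  | succ N ih =>
    intro V hcard hacyc
    rcases V.eq_empty_or_nonempty with rfl | hne
    · refine ⟨by simp [eList_empty], fun j hj => absurd hj (Finset.notMem_empty j)⟩
    · have h : ∃ b ∈ V, ∀ i ∈ V, ¬ E b i := sink_exists hne hacyc
      have hb : h.choose ∈ V := h.choose_spec.1
      have hsink : ∀ i ∈ V, ¬ E h.choose i := h.choose_spec.2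
      set b := h.choose with hbdef
      have hunfold : eList E V = eList E (V.erase b) ++ [b] := by
        rw [eList, dif_pos h]
      have hcard' : (V.erase b).card ≤ N := by
        have h1 : (V.erase b).card = V.card - 1 := Finset.card_erase_of_mem hb
        have h2 : 1 ≤ V.card := Finset.card_pos.mpr hne
        omega
      have hacyc' : Acyc E (V.erase b) := acyc_mono (Finset.erase_subset _ _) hacyc
      obtain ⟨hfin', habs'⟩ := ih (V.erase b) hcard' hacyc'
      constructor
      · rw [hunfold, List.toFinset_append, hfin']
        have : ([b] : List (Fin n)).toFinset = {b} := by simp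
        rw [this, Finset.union_comm, ← Finset.insert_eq, Finset.insert_erase hb]
      · intro j hj
        rw [hunfold, Pl_append, Pl_singleton]
        by_cases hjb : j = b
        · subst hjb
          rw [mul_assoc, xx]
        · have hj' : j ∈ V.erase b := Finset.mem_erase.mpr ⟨hjb, hj⟩
          have hbj : ¬ E b j := hsink j hj
          by_cases hEjb : E j b
          · conv_lhs => rw [← habs' j hj']
            rw [mul_assoc (Pl E (eList E (V.erase b))) (X E j) (X E b),
              mul_assoc (Pl E (eList E (V.erase b))) (X E j * X E b) (X E j),
              xiji hEjb, ← mul_assoc, habs' j hj']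
          · rw [mul_assoc, xcomm (fun hh => hjb hh.symm) hbj hEjb, ← mul_assoc,
              habs' j hj']

lemma eP_absorb {V : Finset (Fin n)} (hacyc : Acyc E V) :
    ∀ u : List (Fin n), (∀ i ∈ u, i ∈ V) →
      Pl E (eList E V) * Pl E u = Pl E (eList E V) := by
  intro u
  induction u with
  | nil => intro _; rw [Pl_nil, mul_one]
  | cons i u ihu =>
    intro hu
    rw [Pl_cons, ← mul_assoc,
      (eList_main V.card V le_rfl hacyc).2 i (hu i (by simp)),
      ihu fun j hj => hu j (by simp [hj])]

lemma eP_idem {V : Finset (Fin n)} (hacyc : Acyc E V) :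
    Pl E (eList E V) * Pl E (eList E V) = Pl E (eList E V) :=
  eP_absorb hacyc _ fun i hi => by
    rw [← (eList_main V.card V le_rfl hacyc).1]
    exact List.mem_toFinset.mpr hi

/-! ### Deleting a letter is compatible with the congruence -/

/-- The monoid endomorphism of the free monoid deleting the letter `b`. -/
def delF (b : Fin n) : FreeMonoid (Fin n) →* FreeMonoid (Fin n) :=
  FreeMonoid.lift (fun i => if i = b then 1 else of i)

lemma delF_of (b i : Fin n) : delF b (of i) = if i = b then 1 else of i :=
  FreeMonoid.lift_eval_of _ _

variable (E) in
/-- Deletion as a congruence. -/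
def delCon (b : Fin n) : Con (FreeMonoid (Fin n)) where
  r := fun w₁ w₂ => conGen (hkRel E) (delF b w₁) (delF b w₂)
  iseqv := ⟨fun _ => (conGen (hkRel E)).refl _, (conGen (hkRel E)).symm,
    (conGen (hkRel E)).trans⟩
  mul' := fun h1 h2 => by
    simp only [map_mul]
    exact (conGen (hkRel E)).mul h1 h2

lemma conGen_le_delCon (b : Fin n) : conGen (hkRel E) ≤ delCon E b := by
  apply Con.conGen_le.mpr
  rintro x y (⟨i, rfl, rfl⟩ | ⟨i, j, hij, h1, h2, rfl, rfl⟩ |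
    ⟨i, j, hE, (⟨rfl, rfl⟩ | ⟨rfl, rfl⟩)⟩)
  · show conGen (hkRel E) (delF b (of i * of i)) (delF b (of i))
    refine toHK_eq.mp ?_
    simp only [map_mul, toHK_mul, delF_of]
    by_cases hib : i = b
    · simp only [if_pos hib, toHK_one, one_mul]
    · simp only [if_neg hib]
      exact xx i
  · show conGen (hkRel E) (delF b (of i * of j)) (delF b (of j * of i))
    refine toHK_eq.mp ?_
    simp only [map_mul, toHK_mul, delF_of]
    by_cases hib : i = b
    · simp only [if_pos hib, toHK_one, one_mul, mul_one]
    · by_cases hjb : j = b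
      · simp only [if_pos hjb, if_neg hib, toHK_one, one_mul, mul_one]
      · simp only [if_neg hib, if_neg hjb]
        exact xcomm hij h1 h2
  · show conGen (hkRel E) (delF b (of i * of j * of i)) (delF b (of i * of j))
    refine toHK_eq.mp ?_
    simp only [map_mul, toHK_mul, delF_of]
    by_cases hib : i = b
    · simp only [if_pos hib, toHK_one, one_mul, mul_one]
    · by_cases hjb : j = b
      · simp only [if_pos hjb, if_neg hib, toHK_one, one_mul, mul_one]
        exact xx i
      · simp only [if_neg hib, if_neg hjb]
        exact xiji hE
  · show conGen (hkRel E) (delF b (of j * of i * of j)) (delF b (of i * of j))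
    refine toHK_eq.mp ?_
    simp only [map_mul, toHK_mul, delF_of]
    by_cases hib : i = b
    · simp only [if_pos hib, toHK_one, one_mul, mul_one]
      by_cases hjb : j = b
      · simp only [if_pos hjb, toHK_one, one_mul, mul_one]
      · simp only [if_neg hjb]
        exact xx j
    · by_cases hjb : j = b
      · simp only [if_pos hjb, if_neg hib, toHK_one, one_mul, mul_one]
      · simp only [if_neg hib, if_neg hjb]
        exact xjij hE

lemma delF_ofList (b : Fin n) (l : List (Fin n)) :
    delF b (ofList l) = ofList (l.filter (· ≠ b)) := by
  induction l with
  | nil => exact map_one _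
  | cons i l ih =>
    rw [ofList_cons, map_mul, delF_of]
    by_cases hib : i = b
    · subst hib
      simp only [if_pos rfl, one_mul, ih, List.filter_cons]
      simp
    · rw [if_neg hib, ih, List.filter_cons, if_pos (by simpa using hib), ofList_cons]

/-- Deleting a letter preserves equality in the Hecke–Kiselman monoid. -/
lemma toHK_delF {x y : FreeMonoid (Fin n)} (b : Fin n) (h : toHK E x = toHK E y) :
    toHK E (delF b x) = toHK E (delF b y) :=
  toHK_eq.mpr (conGen_le_delCon b (toHK_eq.mp h))

/-- Any word containing `b` (where `b` has no edge to any other letter) can be written,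
modulo the congruence, with a single `b`, at the position of the last `b`. -/
lemma split_last (b : Fin n) :
    ∀ l : List (Fin n), (∀ i ∈ l, i = b ∨ (i ≠ b ∧ ¬ E b i)) → b ∈ l →
      ∃ u v : List (Fin n), (∀ i ∈ u, i ≠ b) ∧ (∀ i ∈ v, i ≠ b) ∧
        u ++ v = l.filter (· ≠ b) ∧ Pl E l = Pl E u * (X E b * Pl E v) := by
  intro l
  induction l with
  | nil => intro _ h; cases h
  | cons i l ih =>
    intro hcond hbl
    have hcond' : ∀ k ∈ l, k = b ∨ (k ≠ b ∧ ¬ E b k) := fun k hk => hcond k (by simp [hk])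
    by_cases hib : i = b
    · subst hib
      by_cases hbl' : i ∈ l
      · obtain ⟨u, v, hu, hv, hf, hP⟩ := ih hcond' hbl'
        have huE : ∀ k ∈ u, k ≠ i ∧ ¬ E i k := by
          intro k hk
          have hkD : k ∈ l.filter (· ≠ i) := hf ▸ List.mem_append_left v hk
          have hkl : k ∈ l := List.mem_of_mem_filter hkD
          rcases hcond' k hkl with rfl | ⟨h1, h2⟩
          · exact absurd rfl (hu k hk)
          · exact ⟨h1, h2⟩
        refine ⟨u, v, hu, hv, ?_, ?_⟩
        · rw [List.filter_cons, if_neg (by simp)]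
          exact hf
        · rw [Pl_cons, hP]
          exact absorb i u huE (Pl E v)
      · refine ⟨[], l, by simp, fun k hk => fun hkb => hbl' (hkb ▸ hk), ?_, ?_⟩
        · rw [List.filter_cons, if_neg (by simp)]
          have hfl : l.filter (· ≠ i) = l :=
            List.filter_eq_self.mpr fun a ha => by
              simpa using fun hai : a = i => hbl' (hai ▸ ha)
          rw [hfl, List.nil_append]
        · rw [Pl_cons, Pl_nil, one_mul]
    · have hbl' : b ∈ l := by
        rcases List.mem_cons.mp hbl with h | h
        · exact absurd h.symm hib
        · exact h
      obtain ⟨u, v, hu, hv, hf, hP⟩ := ih hcond' hbl'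
      refine ⟨i :: u, v, ?_, hv, ?_, ?_⟩
      · intro k hk
        rcases List.mem_cons.mp hk with rfl | hk
        · exact hib
        · exact hu k hk
      · rw [List.filter_cons, if_pos (by simpa using hib), List.cons_append, hf]
      · rw [Pl_cons, hP, ← mul_assoc, ← Pl_cons]

/-- Main classification step: an idempotent with acyclic support is the canonical
idempotent of its support. -/
lemma idem_eq_eP :
    ∀ (N : ℕ) (l : List (Fin n)), l.toFinset.card ≤ N → Acyc E l.toFinset →
      Pl E l * Pl E l = Pl E l → Pl E l = Pl E (eList E l.toFinset) := by
  intro N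
  induction N with
  | zero =>
    intro l hcard _ _
    have h0 : l.toFinset = ∅ := Finset.card_eq_zero.mp (Nat.le_zero.mp hcard)
    have : l = [] := by
      cases l with
      | nil => rfl
      | cons i l => exact absurd h0 (by simp)
    subst this
    rw [show (([] : List (Fin n)).toFinset) = ∅ from rfl, eList_empty]
  | succ N ih =>
    intro l hcard hacyc hidem
    rcases List.eq_nil_or_concat l with rfl | hnenil
    · rw [show (([] : List (Fin n)).toFinset) = ∅ from rfl, eList_empty]
    · have hne : l.toFinset.Nonempty := by
        obtain ⟨l', a, rfl⟩ := hnenil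
        exact ⟨a, by simp⟩
      have h : ∃ b ∈ l.toFinset, ∀ i ∈ l.toFinset, ¬ E b i := sink_exists hne hacyc
      have hb : h.choose ∈ l.toFinset := h.choose_spec.1
      have hsink : ∀ i ∈ l.toFinset, ¬ E h.choose i := h.choose_spec.2
      set b := h.choose with hbdef
      set V := l.toFinset with hV
      have hunfold : eList E V = eList E (V.erase b) ++ [b] := by
        rw [eList, dif_pos h]
      have hbl : b ∈ l := List.mem_toFinset.mp hb
      have hcond : ∀ i ∈ l, i = b ∨ (i ≠ b ∧ ¬ E b i) := by
        intro i hi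
        by_cases hib : i = b
        · exact Or.inl hib
        · exact Or.inr ⟨hib, hsink i (List.mem_toFinset.mpr hi)⟩
      obtain ⟨u, v, hu, hv, hf, hP⟩ := split_last b l hcond hbl
      have hmemD : ∀ i, i ∈ l.filter (· ≠ b) ↔ i ∈ l ∧ i ≠ b := by
        intro i
        simp [List.mem_filter]
      have hDfin : (l.filter (· ≠ b)).toFinset = V.erase b := by
        ext k
        simp only [List.mem_toFinset, hmemD, Finset.mem_erase, hV, List.mem_toFinset]
        tauto
      have hDcard : (l.filter (· ≠ b)).toFinset.card ≤ N := by
        rw [hDfin, Finset.card_erase_of_mem hb]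
        have h2 : 1 ≤ V.card := Finset.card_pos.mpr hne
        omega
      have hDacyc : Acyc E (l.filter (· ≠ b)).toFinset := by
        rw [hDfin]
        exact acyc_mono (Finset.erase_subset _ _) hacyc
      -- idempotency of the deleted word
      have hDidem : Pl E (l.filter (· ≠ b)) * Pl E (l.filter (· ≠ b)) = Pl E (l.filter (· ≠ b)) := by
        have h1 : toHK E (ofList l * ofList l) = toHK E (ofList l) := by
          rw [toHK_mul]
          exact hidem
        have h2 := toHK_delF b h1
        rw [map_mul, toHK_mul, delF_ofList] at h2
        exact h2
      have hD_eq : Pl E (l.filter (· ≠ b)) = Pl E (eList E (V.erase b)) := by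
        rw [← hDfin]
        exact ih (l.filter (· ≠ b)) hDcard hDacyc hDidem
      have hPD : Pl E (l.filter (· ≠ b)) = Pl E u * Pl E v := by
        rw [← hf, Pl_append]
      have hvu_cond : ∀ i ∈ v ++ u, i ≠ b ∧ ¬ E b i := by
        intro i hi
        have hiD : i ∈ l.filter (· ≠ b) := by
          rw [← hf]
          rcases List.mem_append.mp hi with h' | h'
          · exact List.mem_append_right u h'
          · exact List.mem_append_left v h'
        obtain ⟨hil, hib⟩ := (hmemD i).mp hiD
        rcases hcond i hil with rfl | ⟨_, h2⟩
        · exact absurd rfl hib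
        · exact ⟨hib, h2⟩
      have hu_sub : ∀ i ∈ u, i ∈ V.erase b := by
        intro i hi
        have hiD : i ∈ l.filter (· ≠ b) := by rw [← hf]; exact List.mem_append_left v hi
        rw [← hDfin]
        exact List.mem_toFinset.mpr hiD
      have hv_sub : ∀ i ∈ v, i ∈ V := by
        intro i hi
        have hiD : i ∈ l.filter (· ≠ b) := by rw [← hf]; exact List.mem_append_right u hi
        exact List.mem_toFinset.mpr ((hmemD i).mp hiD).1
      have hacyc' : Acyc E (V.erase b) := acyc_mono (Finset.erase_subset _ _) hacyc
      calc Pl E l = Pl E l * Pl E l := hidem.symm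
        _ = (Pl E u * (X E b * Pl E v)) * (Pl E u * (X E b * Pl E v)) := by rw [← hP]
        _ = Pl E u * (X E b * (Pl E (v ++ u) * (X E b * Pl E v))) := by
            simp only [Pl_append, mul_assoc]
        _ = Pl E u * (Pl E (v ++ u) * (X E b * Pl E v)) := by
            rw [absorb b (v ++ u) hvu_cond (Pl E v)]
        _ = (Pl E u * Pl E v) * (Pl E u * (X E b * Pl E v)) := by
            simp only [Pl_append, mul_assoc]
        _ = Pl E (eList E (V.erase b)) * (Pl E u * (X E b * Pl E v)) := by
            rw [← hPD, hD_eq]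
        _ = (Pl E (eList E (V.erase b)) * Pl E u) * (X E b * Pl E v) := by
            rw [mul_assoc]
        _ = Pl E (eList E (V.erase b)) * (X E b * Pl E v) := by
            rw [eP_absorb hacyc' u hu_sub]
        _ = (Pl E (eList E (V.erase b)) * X E b) * Pl E v := by
            rw [mul_assoc]
        _ = Pl E (eList E V) * Pl E v := by
            rw [hunfold, Pl_append, Pl_singleton]
        _ = Pl E (eList E V) := eP_absorb hacyc v hv_sub

/-- The support of an idempotent carries no oriented cycle. -/
lemma acyc_of_idem (hsimple : ∀ i j : Fin n, E i j → i ≠ j ∧ ¬ E j i)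
    (l : List (Fin n)) (hidem : Pl E l * Pl E l = Pl E l) : Acyc E l.toFinset := by
  intro v hv
  have h1 : toHK E (ofList (l ++ l)) = toHK E (ofList l) := by
    rw [ofList_append, toHK_mul]
    exact hidem
  have h2 : actL E (l ++ l) = actL E l :=
    conGen_le_actCon hsimple (toHK_eq.mp h1)
  set a := actL E l (fun _ => 0) with ha
  have hfixa : actL E l a = a := by
    have h3 := congrFun h2 (fun _ => 0)
    rw [actL_append] at h3
    exact h3
  have hfix : ∀ i ∈ l, Tact E i a = a := fix_of_actL_fix l a hfixa
  have key : ∀ p q : Fin n, (p ∈ l.toFinset ∧ q ∈ l.toFinset ∧ E p q) → a p < a q := by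
    rintro p q ⟨-, hq, hE⟩
    have hT := congrFun (hfix q (List.mem_toFinset.mp hq)) q
    rw [Tact_apply_self] at hT
    have h4 : a p + 1 ≤ predSup E q a := le_predSup hE a
    omega
  have htrans : Transitive (fun p q : Fin n => a p < a q) := fun x y z h1 h2 => lt_trans h1 h2
  have := Relation.TransGen.mono key v v hv
  haveI hIT : IsTrans (Fin n) (fun p q : Fin n => a p < a q) := ⟨htrans⟩
  rw [Relation.transGen_eq_self] at this
  exact lt_irrefl _ this

/-- The support congruence. -/
def suppCon : Con (FreeMonoid (Fin n)) where
  r := fun w₁ w₂ => w₁.toList.toFinset = w₂.toList.toFinset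
  iseqv := ⟨fun _ => rfl, Eq.symm, Eq.trans⟩
  mul' := fun {w x y z} h1 h2 => by
    show (toList (w * y)).toFinset = (toList (x * z)).toFinset
    rw [toList_mul, toList_mul, List.toFinset_append, List.toFinset_append, h1, h2]

lemma conGen_le_suppCon : conGen (hkRel E) ≤ suppCon := by
  apply Con.conGen_le.mpr
  rintro x y (⟨i, rfl, rfl⟩ | ⟨i, j, hij, h1, h2, rfl, rfl⟩ |
    ⟨i, j, hE, (⟨rfl, rfl⟩ | ⟨rfl, rfl⟩)⟩) <;>
  · show (toList _).toFinset = (toList _).toFinset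
    ext k
    simp only [toList_mul, toList_of, List.toFinset_append, List.toFinset_cons,
      List.toFinset_nil, Finset.mem_union, Finset.mem_insert, Finset.mem_singleton,
      Finset.notMem_empty, or_false]
    tauto

variable (E) in
/-- The support of an element of the Hecke–Kiselman monoid. -/
def suppM : HKmonoid E → Finset (Fin n) := fun m =>
  Con.liftOn m (fun w => w.toList.toFinset) fun _ _ h => conGen_le_suppCon h

lemma suppM_toHK (w : FreeMonoid (Fin n)) : suppM E (toHK E w) = w.toList.toFinset := rfl

end HKProof

/-- for a finite simple oriented graph, the idempotents of `HK_Γ` are in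
bijection with the induced subgraphs of `Γ` (given by their vertex sets) containing
no oriented cycle. -/
theorem hk_idempotents_equiv_acyclic_subgraphs {n : ℕ} (E : Fin n → Fin n → Prop)
    (hsimple : ∀ i j : Fin n, E i j → i ≠ j ∧ ¬ E j i) :
    Nonempty
      ({m : HKmonoid E // IsIdempotentElem m} ≃
        {V : Finset (Fin n) //
          ∀ v : Fin n, ¬ Relation.TransGen (fun a b => a ∈ V ∧ b ∈ V ∧ E a b) v v}) := by
  open HKProof in
  refine ⟨{
    toFun := fun m => ⟨suppM E m.1, ?_⟩
    invFun := fun V => ⟨Pl E (eList E V.1), eP_idem V.2⟩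
    left_inv := ?_
    right_inv := ?_ }⟩
  · obtain ⟨w, hw⟩ := Con.mk'_surjective m.1
    have hw' : toHK E w = m.1 := hw
    have hidem : Pl E w.toList * Pl E w.toList = Pl E w.toList := by
      have : Pl E w.toList = toHK E w := rfl
      rw [this, hw']
      exact m.2
    have hacyc := acyc_of_idem hsimple w.toList hidem
    rw [← hw', suppM_toHK]
    exact hacyc
  · rintro ⟨m, hm⟩
    apply Subtype.ext
    obtain ⟨w, hw⟩ := Con.mk'_surjective m
    have hw' : toHK E w = m := hw
    have hPl : Pl E w.toList = toHK E w := rfl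
    have hidem : Pl E w.toList * Pl E w.toList = Pl E w.toList := by
      rw [hPl, hw']
      exact hm
    have hacyc := acyc_of_idem hsimple w.toList hidem
    show Pl E (eList E (suppM E m)) = m
    rw [← hw', suppM_toHK]
    rw [← idem_eq_eP w.toList.toFinset.card w.toList le_rfl hacyc hidem]
    exact hPl
  · rintro ⟨V, hV⟩
    apply Subtype.ext
    show suppM E (Pl E (eList E V)) = V
    have : suppM E (Pl E (eList E V)) = (eList E V).toFinset := rfl
    rw [this]
    exact (eList_main V.card V le_rfl hV).1
end

section
/- Let $f : C_n \to \mathrm{Map}(\mathbb{Z}^n, \mathbb{Z}^n)$ be the monoid homomorphism defined on generators by $f(x_i)(m_1,\ldots,m_n) = (m_1,\ldots,m_{i-1}, m_{i+1}, m_{i+1}, \ldots, m_n)$ for $i \neq n$, and $f(x_n)(m_1,\ldots,m_n) = (m_1,\ldots,m_{n-1}, m_1+1)$. Assume $w = x_{i_1}\cdots x_{i_k} \in C_n$ is a word such that for all $j < l$ either $0 < i_l - i_j < n-1$ or $i_j - i_l \geq 2$. Then the support of $f(w)$ equals $\{1,\ldots,n\} \setminus \{i_1,\ldots,i_k\}$.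 -/
/-- The arrow relation of the oriented cycle `0 → 1 → ⋯ → n-1 → 0` on `Fin n`. -/
def cycleRel (n : ℕ) [NeZero n] : Fin n → Fin n → Prop := fun i j => j = i + 1

/-- The Hecke–Kiselman monoid of the oriented cycle of length `n`. -/
def Cmonoid (n : ℕ) [NeZero n] : Type := HKmonoid (cycleRel n)

instance (n : ℕ) [NeZero n] : Monoid (Cmonoid n) :=
  inferInstanceAs (Monoid (HKmonoid (cycleRel n)))

/-- The generators `x_i` of `C_n`. -/
def cGen (n : ℕ) [NeZero n] (i : Fin n) : Cmonoid n := hkGen (cycleRel n) i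

/-- The map `f(x_i) : ℤⁿ → ℤⁿ`: it replaces the `i`-th coordinate by `m_{i+1}`
(for `i ≠ n`), and `f(x_n)` replaces the `n`-th coordinate by `m_1 + 1`
(indices of the paper are `1,…,n`, here `0,…,n-1`). -/
def cycF (n : ℕ) [NeZero n] (i : Fin n) : (Fin n → ℤ) → (Fin n → ℤ) := fun m =>
  Function.update m i (m (i + 1) + if i.val + 1 = n then 1 else 0)

/-- The image `f(w)` of a word `w = x_{i_1} ⋯ x_{i_k}`, namely
`f(x_{i_1}) ∘ ⋯ ∘ f(x_{i_k})`. -/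
def cycFWord (n : ℕ) [NeZero n] (l : List (Fin n)) : (Fin n → ℤ) → (Fin n → ℤ) :=
  (l.map (cycF n)).foldr (· ∘ ·) id

/-- The support of a map `g : ℤⁿ → ℤⁿ`: the set of coordinates on which `g`
depends essentially. -/
def essSupp (n : ℕ) (g : (Fin n → ℤ) → (Fin n → ℤ)) : Set (Fin n) :=
  {j | ∃ m m' : Fin n → ℤ, (∀ k, k ≠ j → m k = m' k) ∧ g m ≠ g m'}

section Aux
variable (n : ℕ) [NeZero n]

set_option linter.unusedSectionVars false in
lemma foldr_comp_eq (L : List ((Fin n → ℤ) → (Fin n → ℤ))) (g : (Fin n → ℤ) → (Fin n → ℤ)) :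
    L.foldr (· ∘ ·) g = (L.foldr (· ∘ ·) id) ∘ g := by
  induction L with
  | nil => rfl
  | cons a t ih => simp only [List.foldr_cons, ih]; rfl

lemma cycFWord_concat (l : List (Fin n)) (a : Fin n) (m : Fin n → ℤ) :
    cycFWord n (l ++ [a]) m = cycFWord n l (cycF n a m) := by
  have h1 : cycFWord n (l ++ [a]) = (l.map (cycF n)).foldr (· ∘ ·) (cycF n a ∘ id) := by
    simp [cycFWord, List.foldr_append]
  rw [h1, foldr_comp_eq]
  rfl

lemma key (hn : 3 ≤ n) (l : List (Fin n))
    (hl : l.Pairwise (fun x y => x ≠ y ∧ x ≠ y + 1)) :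
    ∃ τ : Fin n → Fin n, ∃ γ : Fin n → ℤ,
      (∀ j, j ∉ l → τ j = j ∧ γ j = 0) ∧ (∀ j, τ j ∉ l) ∧
      ∀ m j, cycFWord n l m j = m (τ j) + γ j := by
  induction l using List.reverseRecOn with
  | nil =>
    exact ⟨id, 0, fun j _ => ⟨rfl, rfl⟩, fun j => List.not_mem_nil,
      fun m j => by simp [cycFWord]⟩
  | append_singleton l' a ih =>
    rw [List.pairwise_append] at hl
    obtain ⟨hP, -, hR⟩ := hl
    have ha : a ∉ l' := fun h => (hR a h a (by simp)).1 rfl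
    have ha1 : a + 1 ∉ l' := fun h => (hR _ h a (by simp)).2 rfl
    have h1n : ((1 : Fin n) : ℕ) = 1 := by
      rw [Fin.val_one']; exact Nat.mod_eq_of_lt (by omega)
    have hne : a + 1 ≠ a := by
      intro h
      have hv := congrArg Fin.val h
      rw [Fin.val_add, h1n] at hv
      have halt := a.is_lt
      rcases Nat.lt_or_ge (a.val + 1) n with hlt | hge
      · rw [Nat.mod_eq_of_lt hlt] at hv; omega
      · have h2 : a.val + 1 = n := by omega
        rw [h2, Nat.mod_self] at hv; omega
    obtain ⟨τ', γ', hτγ, hτ, heq⟩ := ih hP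
    refine ⟨fun j => if τ' j = a then a + 1 else τ' j,
      fun j => γ' j + (if τ' j = a then (if a.val + 1 = n then 1 else 0) else 0), ?_, ?_, ?_⟩
    · intro j hj
      simp only [List.mem_append, List.mem_singleton, not_or] at hj
      obtain ⟨hj1, hj2⟩ := hj
      obtain ⟨ht, hg⟩ := hτγ j hj1
      constructor
      · dsimp only; rw [ht, if_neg hj2]
      · dsimp only; rw [ht, if_neg hj2, hg, add_zero]
    · intro j
      simp only [List.mem_append, List.mem_singleton, not_or]
      by_cases h : τ' j = a
      · simp [h, ha1, hne]
      · simp [h, hτ j]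
    · intro m j
      rw [cycFWord_concat, heq]
      dsimp only
      by_cases h : τ' j = a
      · rw [if_pos h, if_pos h, h]
        simp only [cycF, Function.update_self]
        ring
      · rw [if_neg h, if_neg h]
        simp only [cycF, Function.update_of_ne h]
        ring

end Aux


/-- if the word `w = x_{i_1} ⋯ x_{i_k}` satisfies the condition that for
all `j < l` either `0 < i_l - i_j < n - 1` or `i_j - i_l ≥ 2`, then
`supp f(w) = {1,…,n} \ {i_1,…,i_k}`. -/
theorem essSupp_cycFWord (n : ℕ) [NeZero n] (hn : 3 ≤ n) (l : List (Fin n))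
    (hcond : ∀ p q : Fin l.length, p < q →
      ((0 : ℤ) < ((l.get q).val : ℤ) - ((l.get p).val : ℤ) ∧
        ((l.get q).val : ℤ) - ((l.get p).val : ℤ) < (n : ℤ) - 1) ∨
      ((l.get p).val : ℤ) - ((l.get q).val : ℤ) ≥ 2) :
    essSupp n (cycFWord n l) = {j : Fin n | j ∉ l} := by
  unfold essSupp
  have hpw : l.Pairwise (fun x y => x ≠ y ∧ x ≠ y + 1) := by
    rw [List.pairwise_iff_get]
    intro p q hpq
    have h := hcond p q hpq
    have hqlt := (l.get q).is_lt
    have hplt := (l.get p).is_lt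
    constructor
    · intro he
      rw [he] at h
      omega
    · intro he
      have h1n : ((1 : Fin n) : ℕ) = 1 := by
        rw [Fin.val_one']; exact Nat.mod_eq_of_lt (by omega)
      have hv : (l.get p).val = ((l.get q).val + 1) % n := by
        rw [he, Fin.val_add, h1n]
      rcases Nat.lt_or_ge ((l.get q).val + 1) n with hlt | hge
      · rw [Nat.mod_eq_of_lt hlt] at hv; omega
      · have hv2 : (l.get q).val + 1 = n := by omega
        rw [hv2, Nat.mod_self] at hv
        omega
  obtain ⟨τ, γ, hτγ, hτ, heq⟩ := key n hn l hpw
  ext j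
  simp only [Set.mem_setOf_eq]
  constructor
  · rintro ⟨m, m', hag, hne⟩ hjl
    apply hne
    funext k
    rw [heq, heq]
    congr 1
    apply hag
    intro hc
    exact hτ k (hc ▸ hjl)
  · intro hj
    refine ⟨(fun _ => 0), (fun k => if k = j then 1 else 0), ?_, ?_⟩
    · intro k hk; simp [hk]
    · intro h
      have hc := congrFun h j
      rw [heq, heq] at hc
      obtain ⟨ht, hg⟩ := hτγ j hj
      rw [ht, hg] at hc
      simp at hc
end

section
/- The monoid homomorphism $f : C_n \to \mathrm{Map}(\mathbb{Z}^n, \mathbb{Z}^n)$ given on generators by $f(x_i)(m_1,\ldots,m_n) = (m_1,\ldots,m_{i-1}, m_{i+1}, m_{i+1}, \ldots, m_n)$ for $i \neq n$ and $f(x_n)(m_1,\ldots,m_n) = (m_1,\ldots,m_{n-1}, m_1+1)$ is well defined, i.e., the maps $f(x_i)$ satisfy the defining relations of $C_n$: each $f(x_i)$ is idempotent, $f(x_i)$ and $f(x_j)$ commute when $i,j$ are non-adjacent vertices of the cycle, and $f(x_i)f(x_{i+1})f(x_i) = f(x_{i+1})f(x_i)f(x_{i+1}) = f(x_i)f(x_{i+1})$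 for arrows $i \to i+1$ (mod $n$). -/
theorem succ_ne (n : ℕ) [NeZero n] (hn : 3 ≤ n) (i : Fin n) : i + 1 ≠ i := by
  intro h
  simp [Fin.ext_iff, Fin.val_add] at h
  have := i.isLt
  omega

theorem succ2_ne (n : ℕ) [NeZero n] (hn : 3 ≤ n) (i : Fin n) : i + 1 + 1 ≠ i := by
  intro h
  have h2 : (1 : Fin n) + 1 = 0 := by
    have : i + (1 + 1) = i + 0 := by rw [← add_assoc, h, add_zero]
    exact add_left_cancel this
  have := congrArg Fin.val h2
  have h1 : (1 : Fin n).val = 1 := by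
    simp [Fin.val_one', Nat.mod_eq_of_lt (show 1 < n by omega)]
  rw [Fin.val_add, h1] at this
  rw [Nat.mod_eq_of_lt (show 1 + 1 < n by omega)] at this
  simp at this

theorem cycF_idem (n : ℕ) [NeZero n] (hn : 3 ≤ n) (i : Fin n) :
    cycF n i ∘ cycF n i = cycF n i := by
  funext m
  simp [cycF, Function.comp, Function.update_of_ne (succ_ne n hn i), Function.update_idem]

theorem cycF_comm (n : ℕ) [NeZero n] (i j : Fin n) (hij : i ≠ j) (h1 : j ≠ i + 1)
    (h2 : i ≠ j + 1) : cycF n i ∘ cycF n j = cycF n j ∘ cycF n i := by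
  funext m
  simp only [cycF, Function.comp,
    Function.update_of_ne (Ne.symm h1), Function.update_of_ne (Ne.symm h2)]
  exact Function.update_comm hij.symm _ _ m

theorem cycF_braid1 (n : ℕ) [NeZero n] (hn : 3 ≤ n) (i : Fin n) :
    cycF n i ∘ cycF n (i+1) ∘ cycF n i = cycF n i ∘ cycF n (i+1) := by
  have h1 : i + 1 ≠ i := succ_ne n hn i
  have h2 : i + 1 + 1 ≠ i := succ2_ne n hn i
  have h3 : i + 1 + 1 ≠ i + 1 := succ_ne n hn (i+1)
  funext m
  simp only [Function.comp_apply, cycF, Function.update_self,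
    Function.update_of_ne h1, Function.update_of_ne h2, Function.update_of_ne h3,
    Function.update_idem]
  rw [Function.update_comm h1.symm, Function.update_idem]

theorem cycF_braid2 (n : ℕ) [NeZero n] (hn : 3 ≤ n) (i : Fin n) :
    cycF n (i+1) ∘ cycF n i ∘ cycF n (i+1) = cycF n i ∘ cycF n (i+1) := by
  have h1 : i + 1 ≠ i := succ_ne n hn i
  have h2 : i + 1 + 1 ≠ i := succ2_ne n hn i
  have h3 : i + 1 + 1 ≠ i + 1 := succ_ne n hn (i+1)
  funext m
  simp only [Function.comp_apply, cycF, Function.update_self,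
    Function.update_of_ne h1, Function.update_of_ne h2, Function.update_of_ne h3,
    Function.update_idem]
  rw [Function.update_comm h1, Function.update_idem]

/-- the maps `f(x_i)` satisfy the defining relations of `C_n`, so `f`
is a well-defined monoid homomorphism `C_n → Map(ℤⁿ, ℤⁿ)`. -/
theorem cycF_well_defined (n : ℕ) [NeZero n] (hn : 3 ≤ n) :
    (∀ i : Fin n, cycF n i ∘ cycF n i = cycF n i) ∧
    (∀ i j : Fin n, i ≠ j → j ≠ i + 1 → i ≠ j + 1 →
      cycF n i ∘ cycF n j = cycF n j ∘ cycF n i) ∧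
    (∀ i : Fin n,
      cycF n i ∘ cycF n (i + 1) ∘ cycF n i =
        cycF n (i + 1) ∘ cycF n i ∘ cycF n (i + 1) ∧
      cycF n (i + 1) ∘ cycF n i ∘ cycF n (i + 1) = cycF n i ∘ cycF n (i + 1)) ∧
    ∃ f : Cmonoid n →* Function.End (Fin n → ℤ),
      ∀ i : Fin n, f (cGen n i) = cycF n i := by
  refine ⟨cycF_idem n hn, fun i j a b c => cycF_comm n i j a b c,
    fun i => ⟨(cycF_braid1 n hn i).trans (cycF_braid2 n hn i).symm, cycF_braid2 n hn i⟩, ?_⟩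
  set F : FreeMonoid (Fin n) →* Function.End (Fin n → ℤ) :=
    FreeMonoid.lift (cycF n) with hF
  have hmul : ∀ a b : Function.End (Fin n → ℤ), a * b = a ∘ b := fun _ _ => rfl
  have hle : conGen (hkRel (cycleRel n)) ≤ Con.ker F := by
    apply Con.conGen_le.mpr
    rintro w₁ w₂ (⟨i, rfl, rfl⟩ | ⟨i, j, hij, hEij, hEji, rfl, rfl⟩ | ⟨i, j, hE, h⟩)
    · show F _ = F _
      simp only [map_mul, FreeMonoid.lift_eval_of, hmul]
      exact cycF_idem n hn i
    · show F _ = F _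
      simp only [map_mul, FreeMonoid.lift_eval_of, hmul]
      exact cycF_comm n i j hij (fun h => hEij h) (fun h => hEji h)
    · have hj : j = i + 1 := hE
      subst hj
      rcases h with ⟨rfl, rfl⟩ | ⟨rfl, rfl⟩ <;>
      · show F _ = F _
        simp only [map_mul, FreeMonoid.lift_eval_of, hmul]
        first
          | exact cycF_braid1 n hn i
          | exact cycF_braid2 n hn i
  refine ⟨(conGen (hkRel (cycleRel n))).lift F hle, fun i => ?_⟩
  show (conGen (hkRel (cycleRel n))).lift F hle
    ((conGen (hkRel (cycleRel n))).mk' (FreeMonoid.of i)) = cycF n i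
  rw [Con.lift_mk']
  exact FreeMonoid.lift_eval_of _ _
end

section
/- In the Hecke–Kiselman monoid $C_3$, the element $x_1 x_2 x_3$ generates an infinite cyclic subsemigroup; in particular, $C_3$ is infinite. -/
section Aux

/-- Action of a generator of `C3` on the integers: add 1 iff `x % 3 = i`. -/
def c3step (i : Fin 3) (x : ℤ) : ℤ := if x % 3 = (i.val : ℤ) then x + 1 else x

def c3act (w : FreeMonoid (Fin 3)) (x : ℤ) : ℤ :=
  (FreeMonoid.toList w).foldl (fun a i => c3step i a) x

lemma c3act_mul (u v : FreeMonoid (Fin 3)) (x : ℤ) :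
    c3act (u * v) x = c3act v (c3act u x) := by
  simp [c3act, List.foldl_append]

def c3Con : Con (FreeMonoid (Fin 3)) where
  r := fun u v => ∀ x, c3act u x = c3act v x
  iseqv := ⟨fun _ _ => rfl, fun h x => (h x).symm, fun h h' x => (h x).trans (h' x)⟩
  mul' := fun h h' x => by rw [c3act_mul, c3act_mul, h _, h' _]

lemma c3act_of (i : Fin 3) (x : ℤ) : c3act (FreeMonoid.of i) x = c3step i x := rfl

lemma hkRel_le_c3Con : ∀ u v, hkRel (cycleRel 3) u v → c3Con u v := by
  rintro u v (⟨i, rfl, rfl⟩ | ⟨i, j, hij, hE, hE', rfl, rfl⟩ |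
    ⟨i, j, hE, (⟨rfl, rfl⟩ | ⟨rfl, rfl⟩)⟩)
  · intro x
    simp only [c3act_mul, c3act_of, c3step]
    split_ifs <;> omega
  · exfalso
    simp only [cycleRel] at hE hE'
    fin_cases i <;> fin_cases j <;> simp_all
  · intro x
    simp only [cycleRel] at hE
    subst hE
    fin_cases i <;>
      · simp only [c3act_mul, c3act_of, c3step]
        norm_num [Fin.add_def]
        split_ifs <;> omega
  · intro x
    simp only [cycleRel] at hE
    subst hE
    fin_cases i <;>
      · simp only [c3act_mul, c3act_of, c3step]
        norm_num [Fin.add_def]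
        split_ifs <;> omega

lemma conGen_act {u v : FreeMonoid (Fin 3)}
    (h : conGen (hkRel (cycleRel 3)) u v) (x : ℤ) : c3act u x = c3act v x :=
  (Con.conGen_le.mpr hkRel_le_c3Con) h x

/-- The word `x0 x1 x2`. -/
def c3w : FreeMonoid (Fin 3) := FreeMonoid.of 0 * FreeMonoid.of 1 * FreeMonoid.of 2

lemma c3act_w (m : ℤ) (hm : m % 3 = 0) : c3act c3w m = m + 3 := by
  simp only [c3w, c3act_mul, c3act_of, c3step]
  norm_num
  split_ifs <;> omega

lemma c3act_w_pow (m : ℕ) : c3act (c3w ^ m) 0 = 3 * m := by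
  induction m with
  | zero => rfl
  | succ n ih =>
      rw [pow_succ, c3act_mul, ih, c3act_w] <;> push_cast <;> omega

end Aux

/-- in `C_3`, the element `x₁x₂x₃` generates an infinite cyclic
subsemigroup (its positive powers are pairwise distinct); in particular `C_3`
is infinite. -/
theorem c3_infinite_cyclic :
    Function.Injective (fun k : ℕ => (cGen 3 0 * cGen 3 1 * cGen 3 2) ^ (k + 1)) ∧
    Infinite (Cmonoid 3) := by
  have key : Function.Injective
      (fun k : ℕ => (cGen 3 0 * cGen 3 1 * cGen 3 2) ^ (k + 1)) := by
    intro k l h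
    have h1 : ((conGen (hkRel (cycleRel 3))).mk' c3w) ^ (k + 1)
        = ((conGen (hkRel (cycleRel 3))).mk' c3w) ^ (l + 1) := by
      simp [cGen, hkGen, c3w, map_mul] at h ⊢
      exact h
    rw [← map_pow, ← map_pow] at h1
    have h2 : conGen (hkRel (cycleRel 3)) (c3w ^ (k + 1)) (c3w ^ (l + 1)) :=
      (Con.eq _).mp h1
    have h3 := conGen_act h2 0
    rw [c3act_w_pow, c3act_w_pow] at h3
    omega
  exact ⟨key, Infinite.of_injective _ key⟩
end
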